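/- (Complex-scalar form of Lemma 3.3, where the imaginary unit i plays the role of the bivector e₁e₂, which generates a subalgebra isomorphic to ℂ.) Let m ≥ 2 and k ∈ ℕ. For all z ∈ ℂ^m: (2π)^{-m/2} ∫_{ℝ^m} exp(−z·z/2 + x·z − x·x/4) · (x₁ − i x₂)^k e^{−|x|²/4} dx = (z₁ − i z₂)^k. -/

import Mathlib

open MeasureTheory Complex Finset

noncomputable def MI (n : ℕ) (w : ℂ) : ℂ := ∫ t : ℝ, (t:ℂ)^n * Complex.exp (t*w - t^2/2)

lemma integrable_MI (n : ℕ) (w : ℂ) :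
    Integrable fun t : ℝ => (t:ℂ)^n * Complex.exp (t*w - t^2/2) := by
  have hc : Continuous fun t : ℝ => (t:ℂ)^n * Complex.exp (t*w - t^2/2) := by fun_prop
  set a : ℝ := |w.re| + 1 with ha
  have ha0 : 0 < a := by positivity
  refine ((integrable_exp_neg_mul_sq (by norm_num : (0:ℝ) < 1/4)).const_mul
    ((n.factorial : ℝ) * Real.exp (a^2))).mono' hc.aestronglyMeasurable ?_
  filter_upwards with t
  have h1 : ‖(t:ℂ)^n * Complex.exp (t*w - t^2/2)‖ = |t|^n * Real.exp (t * w.re - t^2/2) := by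
    have he : (t:ℂ)*w - (t:ℂ)^2/2 = (t:ℂ)*w - ((t^2/2 : ℝ) : ℂ) := by push_cast; ring
    rw [norm_mul, norm_pow, he, Complex.norm_exp,
      Complex.norm_real, Real.norm_eq_abs, Complex.sub_re, Complex.re_ofReal_mul, Complex.ofReal_re]
  rw [h1]
  have h2 : |t|^n ≤ (n.factorial : ℝ) * Real.exp |t| := by
    have h := Real.pow_div_factorial_le_exp (x := |t|) (abs_nonneg t) n
    have hf : (0:ℝ) < n.factorial := by positivity
    calc |t|^n = (|t|^n / n.factorial) * n.factorial := by field_simp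
    _ ≤ Real.exp |t| * n.factorial := mul_le_mul_of_nonneg_right h hf.le
    _ = (n.factorial : ℝ) * Real.exp |t| := by ring
  have h3 : Real.exp |t| * Real.exp (t * w.re - t^2/2) ≤ Real.exp (a^2) * Real.exp (-(1/4) * t^2) := by
    rw [← Real.exp_add, ← Real.exp_add, Real.exp_le_exp]
    have h4 : t * w.re ≤ |t| * |w.re| := by
      calc t * w.re ≤ |t * w.re| := le_abs_self _
      _ = |t| * |w.re| := abs_mul _ _
    have h5 : |w.re| = a - 1 := by rw [ha]; ring
    have h6 : |t| * |t| = t * t := abs_mul_abs_self t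
    nlinarith [sq_nonneg (a - |t|/2), abs_nonneg t]
  calc |t|^n * Real.exp (t * w.re - t^2/2)
      ≤ ((n.factorial : ℝ) * Real.exp |t|) * Real.exp (t * w.re - t^2/2) :=
        mul_le_mul_of_nonneg_right h2 (Real.exp_pos _).le
    _ = (n.factorial : ℝ) * (Real.exp |t| * Real.exp (t * w.re - t^2/2)) := by ring
    _ ≤ (n.factorial : ℝ) * (Real.exp (a^2) * Real.exp (-(1/4) * t^2)) :=
        mul_le_mul_of_nonneg_left h3 (by positivity)
    _ = (n.factorial : ℝ) * Real.exp (a^2) * Real.exp (-(1/4) * t^2) := by ring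

lemma MI_zero (w : ℂ) : MI 0 w = (Real.sqrt (2*Real.pi) : ℂ) * Complex.exp (w^2/2) := by
  have hb : (-(1/2) : ℂ).re < 0 := by norm_num
  have h := integral_cexp_quadratic hb w 0
  have h2 : MI 0 w = ∫ x : ℝ, Complex.exp (-(1/2) * (x:ℂ)^2 + w * x + 0) := by
    unfold MI
    congr 1 with t
    rw [pow_zero, one_mul]
    ring_nf
  have h3 : ((Real.pi : ℂ) / -(-(1/2))) = ((2*Real.pi : ℝ) : ℂ) := by push_cast; ring
  have h4 : ((Real.sqrt (2*Real.pi) : ℝ) : ℂ) = ((2*Real.pi : ℝ) : ℂ) ^ (1/2 : ℂ) := by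
    rw [Real.sqrt_eq_rpow, Complex.ofReal_cpow (by positivity)]
    norm_num
  rw [h2, h, h3, ← h4]
  congr 2
  ring

lemma MI_rec (n : ℕ) (w : ℂ) : MI (n+1) w = w * MI n w + n * MI (n-1) w := by
  set E : ℂ → ℂ := fun s => Complex.exp (s*w - s^2/2) with hE
  have hEd : ∀ s : ℂ, HasDerivAt E (E s * (w - s)) s := by
    intro s
    have h1 : HasDerivAt (fun s:ℂ => s*w) w s := hasDerivAt_mul_const w
    have h2 : HasDerivAt (fun s:ℂ => s^2/2) s s := by
      have h := (hasDerivAt_pow 2 s).div_const 2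
      exact h.congr_deriv (by norm_num)
    exact (h1.sub h2).cexp
  have hint : ∀ m : ℕ, Integrable fun t : ℝ => (t:ℂ)^m * E t := fun m => integrable_MI m w
  have hA : Integrable fun t : ℝ => (n:ℂ) * ((t:ℂ)^(n-1) * E t) + w * ((t:ℂ)^n * E t) :=
    ((hint (n-1)).const_mul _).add ((hint n).const_mul w)
  have hg_int : Integrable fun t : ℝ =>
      (n:ℂ) * ((t:ℂ)^(n-1) * E t) + w * ((t:ℂ)^n * E t) - (t:ℂ)^(n+1) * E t :=
    hA.sub (hint (n+1))
  have hderiv : ∀ t : ℝ, HasDerivAt (fun t : ℝ => (t:ℂ)^n * E t)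
      ((n:ℂ) * ((t:ℂ)^(n-1) * E t) + w * ((t:ℂ)^n * E t) - (t:ℂ)^(n+1) * E t) t := by
    intro t
    have h := ((hasDerivAt_pow n ((t:ℝ):ℂ)).mul (hEd t)).comp_ofReal
    exact h.congr_deriv (by ring)
  have h0 : ∫ t : ℝ, ((n:ℂ) * ((t:ℂ)^(n-1) * E t) + w * ((t:ℂ)^n * E t)
      - (t:ℂ)^(n+1) * E t) = 0 :=
    integral_eq_zero_of_hasDerivAt_of_integrable hderiv hg_int (hint n)
  have hsplit : (∫ t : ℝ, ((n:ℂ) * ((t:ℂ)^(n-1) * E t) + w * ((t:ℂ)^n * E t)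
      - (t:ℂ)^(n+1) * E t)) = (n:ℂ) * MI (n-1) w + w * MI n w - MI (n+1) w := by
    calc (∫ t : ℝ, ((n:ℂ) * ((t:ℂ)^(n-1) * E t) + w * ((t:ℂ)^n * E t) - (t:ℂ)^(n+1) * E t))
        = (∫ t : ℝ, ((n:ℂ) * ((t:ℂ)^(n-1) * E t) + w * ((t:ℂ)^n * E t)))
          - ∫ t : ℝ, (t:ℂ)^(n+1) * E t := integral_sub hA (hint (n+1))
      _ = ((∫ t : ℝ, (n:ℂ) * ((t:ℂ)^(n-1) * E t)) + ∫ t : ℝ, w * ((t:ℂ)^n * E t))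
          - ∫ t : ℝ, (t:ℂ)^(n+1) * E t := by
            rw [integral_add ((hint (n-1)).const_mul _) ((hint n).const_mul w)]
      _ = (n:ℂ) * MI (n-1) w + w * MI n w - MI (n+1) w := by
            rw [integral_const_mul, integral_const_mul]
            rfl
  rw [hsplit] at h0
  linear_combination -h0

lemma Skey (a b : ℂ) (k : ℕ) :
    ∑ j ∈ range (k+1), ((k.choose j : ℕ) : ℂ) * ((-Complex.I)^j * (MI (k-j) a * MI j b))
      = ((2*Real.pi : ℝ) : ℂ) * Complex.exp ((a^2+b^2)/2) * (a - Complex.I*b)^k := by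
  induction k with
  | zero =>
      have h0 : ∑ j ∈ range (0+1), ((Nat.choose 0 j : ℕ):ℂ)
          * ((-Complex.I)^j * (MI (0-j) a * MI j b)) = MI 0 a * MI 0 b := by simp
      rw [pow_zero, mul_one, h0, MI_zero, MI_zero]
      have hs : ((Real.sqrt (2*Real.pi) : ℝ) : ℂ) * ((Real.sqrt (2*Real.pi) : ℝ) : ℂ)
          = ((2*Real.pi : ℝ) : ℂ) := by
        rw [← Complex.ofReal_mul, Real.mul_self_sqrt (by positivity)]
      calc ((Real.sqrt (2*Real.pi) : ℝ) : ℂ) * Complex.exp (a^2/2)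
            * (((Real.sqrt (2*Real.pi) : ℝ) : ℂ) * Complex.exp (b^2/2))
          = (((Real.sqrt (2*Real.pi):ℝ):ℂ) * ((Real.sqrt (2*Real.pi):ℝ):ℂ))
            * (Complex.exp (a^2/2) * Complex.exp (b^2/2)) := by ring
        _ = ((2*Real.pi : ℝ) : ℂ) * Complex.exp ((a^2+b^2)/2) := by
            rw [hs, ← Complex.exp_add]
            ring_nf
  | succ k ih =>
      have hI2 : (-Complex.I) * (-Complex.I) = -1 := by
        rw [neg_mul_neg, Complex.I_mul_I]
      rw [Finset.sum_choose_succ_mul (fun i l => (-Complex.I)^i * (MI l a * MI i b)) k]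
      have h1 : ∀ j ∈ range (k+1), ((k.choose j : ℕ):ℂ)
            * ((-Complex.I)^j * (MI (k+1-j) a * MI j b))
          = a * (((k.choose j : ℕ):ℂ) * ((-Complex.I)^j * (MI (k-j) a * MI j b)))
            + (((k-j : ℕ):ℕ):ℂ) * (((k.choose j:ℕ):ℂ)
              * ((-Complex.I)^j * (MI (k-j-1) a * MI j b))) := by
        intro j hj
        have hj' : j ≤ k := by simpa [Nat.lt_succ_iff] using hj
        have hke : k+1-j = (k-j)+1 := by omega
        rw [hke, MI_rec]
        ring
      have h2 : ∀ j ∈ range (k+1), ((k.choose j : ℕ):ℂ)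
            * ((-Complex.I)^(j+1) * (MI (k-j) a * MI (j+1) b))
          = (-Complex.I*b) * (((k.choose j : ℕ):ℂ)
              * ((-Complex.I)^j * (MI (k-j) a * MI j b)))
            + (-Complex.I) * ((j:ℕ):ℂ) * (((k.choose j:ℕ):ℂ)
              * ((-Complex.I)^j * (MI (k-j) a * MI (j-1) b))) := by
        intro j hj
        rw [MI_rec, pow_succ]
        ring
      rw [Finset.sum_congr rfl h1, Finset.sum_congr rfl h2, Finset.sum_add_distrib,
        Finset.sum_add_distrib, ← Finset.mul_sum, ← Finset.mul_sum, ih]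
      have hUV : (∑ j ∈ range (k+1), (((k-j : ℕ):ℕ):ℂ) * (((k.choose j:ℕ):ℂ)
              * ((-Complex.I)^j * (MI (k-j-1) a * MI j b))))
          + ∑ j ∈ range (k+1), (-Complex.I) * ((j:ℕ):ℂ) * (((k.choose j:ℕ):ℂ)
              * ((-Complex.I)^j * (MI (k-j) a * MI (j-1) b))) = 0 := by
        rw [Finset.sum_range_succ, Finset.sum_range_succ']
        simp only [Nat.sub_self, Nat.cast_zero, zero_mul, mul_zero, add_zero, zero_add,
          Nat.cast_ofNat, CharP.cast_eq_zero]
        rw [← Finset.sum_add_distrib]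
        refine Finset.sum_eq_zero fun j hj => ?_
        have hcast : ((k.choose (j+1) * (j+1) : ℕ) : ℂ) = ((k.choose j * (k-j) : ℕ) : ℂ) := by
          exact_mod_cast congrArg (Nat.cast : ℕ → ℂ) (Nat.choose_succ_right_eq k j)
        push_cast at hcast
        have hsub : k - (j+1) = k - j - 1 := by omega
        rw [hsub, pow_succ, Nat.add_sub_cancel]
        push_cast
        linear_combination (-((-Complex.I)^j) * (MI (k-j-1) a * MI j b)) * hcast
          + (((j:ℂ)+1) * (k.choose (j+1):ℂ) * (-Complex.I)^j * (MI (k-j-1) a * MI j b)) * hI2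
      calc a * (((2*Real.pi : ℝ):ℂ) * Complex.exp ((a^2+b^2)/2) * (a - Complex.I*b)^k)
            + (∑ j ∈ range (k+1), (((k-j : ℕ):ℕ):ℂ) * (((k.choose j:ℕ):ℂ)
              * ((-Complex.I)^j * (MI (k-j-1) a * MI j b))))
            + ((-Complex.I*b) * (((2*Real.pi : ℝ):ℂ) * Complex.exp ((a^2+b^2)/2)
              * (a - Complex.I*b)^k)
            + ∑ j ∈ range (k+1), (-Complex.I) * ((j:ℕ):ℂ) * (((k.choose j:ℕ):ℂ)
              * ((-Complex.I)^j * (MI (k-j) a * MI (j-1) b))))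
          = (a - Complex.I*b) * (((2*Real.pi : ℝ):ℂ) * Complex.exp ((a^2+b^2)/2)
              * (a - Complex.I*b)^k)
            + ((∑ j ∈ range (k+1), (((k-j : ℕ):ℕ):ℂ) * (((k.choose j:ℕ):ℂ)
              * ((-Complex.I)^j * (MI (k-j-1) a * MI j b))))
            + ∑ j ∈ range (k+1), (-Complex.I) * ((j:ℕ):ℂ) * (((k.choose j:ℕ):ℂ)
              * ((-Complex.I)^j * (MI (k-j) a * MI (j-1) b)))) := by ring
        _ = ((2*Real.pi : ℝ):ℂ) * Complex.exp ((a^2+b^2)/2) * (a - Complex.I*b)^(k+1) := by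
            rw [hUV, add_zero, pow_succ]
            ring

/-- Complex-scalar form of Lemma 3.3: the Segal–Bargmann transform of
`(x₁ - i x₂)^k e^{-|x|²/4}` is `(z₁ - i z₂)^k`. -/
theorem segalBargmann_complex_power (m : ℕ) (hm : 2 ≤ m) (k : ℕ) (z : Fin m → ℂ) :
    ((Real.sqrt (2 * Real.pi) ^ m : ℝ) : ℂ)⁻¹ *
      ∫ x : Fin m → ℝ,
        Complex.exp (-(∑ j, z j ^ 2) / 2 + (∑ j, (x j : ℂ) * z j) - (∑ j, (x j : ℂ) ^ 2) / 4)
          * ((x ⟨0, by omega⟩ : ℂ) - Complex.I * (x ⟨1, by omega⟩ : ℂ)) ^ k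
          * (Real.exp (-(∑ j, x j ^ 2) / 4) : ℂ)
    = (z ⟨0, by omega⟩ - Complex.I * z ⟨1, by omega⟩) ^ k := by
  have h0 : (0:ℕ) < m := by omega
  have h1 : (1:ℕ) < m := by omega
  set i0 : Fin m := ⟨0, h0⟩ with hi0
  set i1 : Fin m := ⟨1, h1⟩ with hi1
  have h10 : i1 ≠ i0 := by simp [hi0, hi1, Fin.ext_iff]
  have hmem1 : i1 ∈ Finset.univ.erase i0 := Finset.mem_erase.mpr ⟨h10, Finset.mem_univ _⟩
  set e : ℕ → Fin m → ℕ := fun j l => if l = i0 then k - j else if l = i1 then j else 0 with he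
  set g : ℕ → Fin m → ℝ → ℂ :=
    fun j l t => (t:ℂ)^(e j l) * Complex.exp ((t:ℂ) * z l - (t:ℂ)^2/2) with hg
  set A : ℂ := Complex.exp (-(∑ jj, z jj ^ 2) / 2) with hA
  -- pointwise integrand identity
  have hprodpow : ∀ (j:ℕ) (x : Fin m → ℝ),
      (∏ l, ((x l:ℂ))^(e j l)) = ((x i0:ℂ))^(k-j) * ((x i1:ℂ))^j := by
    intro j x
    rw [← Finset.mul_prod_erase Finset.univ _ (Finset.mem_univ i0),
      ← Finset.mul_prod_erase _ _ hmem1]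
    rw [Finset.prod_eq_one, mul_one]
    · simp [he, h10]
    · intro l hl
      have hl1 : l ≠ i1 := (Finset.mem_erase.mp hl).1
      have hl0 : l ≠ i0 := (Finset.mem_erase.mp (Finset.mem_erase.mp hl).2).1
      simp [he, hl0, hl1]
  have hintegrand : ∀ x : Fin m → ℝ,
      Complex.exp (-(∑ jj, z jj ^ 2) / 2 + (∑ jj, (x jj : ℂ) * z jj) - (∑ jj, (x jj : ℂ) ^ 2) / 4)
        * ((x i0 : ℂ) - Complex.I * (x i1 : ℂ)) ^ k * (Real.exp (-(∑ jj, x jj ^ 2) / 4) : ℂ)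
      = ∑ j ∈ range (k+1), ((k.choose j : ℕ):ℂ) * ((-Complex.I)^j
          * (A * ∏ l, g j l (x l))) := by
    intro x
    have hsum : Complex.exp (-(∑ jj, z jj ^ 2) / 2 + (∑ jj, (x jj : ℂ) * z jj)
          - (∑ jj, (x jj : ℂ) ^ 2) / 4) * (Real.exp (-(∑ jj, x jj ^ 2) / 4) : ℂ)
        = A * ∏ l, Complex.exp ((x l:ℂ) * z l - (x l:ℂ)^2/2) := by
      rw [Complex.ofReal_exp, ← Complex.exp_add, hA, ← Complex.exp_sum, ← Complex.exp_add]
      congr 1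
      push_cast
      rw [Finset.sum_sub_distrib, ← Finset.sum_div]
      ring
    have hpow : ((x i0 : ℂ) - Complex.I * (x i1:ℂ))^k
        = ∑ j ∈ range (k+1), (-(Complex.I * (x i1:ℂ)))^j * ((x i0:ℂ))^(k-j)
            * ((k.choose j : ℕ) : ℂ) := by
      rw [sub_eq_neg_add, add_pow]
    calc Complex.exp (-(∑ jj, z jj ^ 2) / 2 + (∑ jj, (x jj : ℂ) * z jj)
            - (∑ jj, (x jj : ℂ) ^ 2) / 4)
          * ((x i0 : ℂ) - Complex.I * (x i1 : ℂ)) ^ k * (Real.exp (-(∑ jj, x jj ^ 2) / 4) : ℂ)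
        = (Complex.exp (-(∑ jj, z jj ^ 2) / 2 + (∑ jj, (x jj : ℂ) * z jj)
            - (∑ jj, (x jj : ℂ) ^ 2) / 4) * (Real.exp (-(∑ jj, x jj ^ 2) / 4) : ℂ))
          * ((x i0 : ℂ) - Complex.I * (x i1 : ℂ)) ^ k := by ring
      _ = (A * ∏ l, Complex.exp ((x l:ℂ) * z l - (x l:ℂ)^2/2))
          * ∑ j ∈ range (k+1), (-(Complex.I * (x i1:ℂ)))^j * ((x i0:ℂ))^(k-j)
            * ((k.choose j : ℕ) : ℂ) := by rw [hsum, hpow]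
      _ = ∑ j ∈ range (k+1), ((k.choose j : ℕ):ℂ) * ((-Complex.I)^j
          * (A * ∏ l, g j l (x l))) := by
        rw [Finset.mul_sum]
        refine Finset.sum_congr rfl fun j hj => ?_
        have : (∏ l, g j l (x l))
            = (∏ l, ((x l:ℂ))^(e j l)) * ∏ l, Complex.exp ((x l:ℂ) * z l - (x l:ℂ)^2/2) := by
          rw [hg, ← Finset.prod_mul_distrib]
        rw [this, hprodpow j x]
        ring
  -- integrate
  have hint_j : ∀ j ∈ range (k+1), Integrable
      (fun x : Fin m → ℝ => ((k.choose j : ℕ):ℂ) * ((-Complex.I)^j * (A * ∏ l, g j l (x l)))) := by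
    intro j _
    exact (((Integrable.fintype_prod (fun l => integrable_MI (e j l) (z l))).const_mul
      A).const_mul _).const_mul _
  have hIeq : (∫ x : Fin m → ℝ,
        Complex.exp (-(∑ jj, z jj ^ 2) / 2 + (∑ jj, (x jj : ℂ) * z jj)
          - (∑ jj, (x jj : ℂ) ^ 2) / 4)
        * ((x i0 : ℂ) - Complex.I * (x i1 : ℂ)) ^ k * (Real.exp (-(∑ jj, x jj ^ 2) / 4) : ℂ))
      = ∑ j ∈ range (k+1), ((k.choose j : ℕ):ℂ) * ((-Complex.I)^j
          * (A * ∏ l, MI (e j l) (z l))) := by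
    rw [integral_congr_ae (Filter.Eventually.of_forall hintegrand), integral_finset_sum _ hint_j]
    refine Finset.sum_congr rfl fun j hj => ?_
    rw [integral_const_mul, integral_const_mul, integral_const_mul,
      integral_fintype_prod_volume_eq_prod (f := fun l t => g j l t)]
    rfl
  -- evaluate the product of MIs
  set S2 : Finset (Fin m) := (Finset.univ.erase i0).erase i1 with hS2
  set R : ℂ := ∏ l ∈ S2, MI 0 (z l) with hR
  have hprodMI : ∀ j, (∏ l, MI (e j l) (z l)) = MI (k-j) (z i0) * (MI j (z i1) * R) := by
    intro j
    rw [← Finset.mul_prod_erase Finset.univ _ (Finset.mem_univ i0),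
      ← Finset.mul_prod_erase _ _ hmem1]
    have h2 : ∀ l ∈ S2, MI (e j l) (z l) = MI 0 (z l) := by
      intro l hl
      have hl1 : l ≠ i1 := (Finset.mem_erase.mp hl).1
      have hl0 : l ≠ i0 := (Finset.mem_erase.mp (Finset.mem_erase.mp hl).2).1
      simp [he, hl0, hl1]
    rw [hR, ← Finset.prod_congr rfl h2]
    simp [he, h10, hS2]
  -- value of R
  have hcard : S2.card = m - 2 := by
    rw [hS2, Finset.card_erase_of_mem hmem1, Finset.card_erase_of_mem (Finset.mem_univ i0),
      Finset.card_univ, Fintype.card_fin]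
    omega
  have hRval : R = ((Real.sqrt (2*Real.pi) : ℝ) : ℂ)^(m-2)
      * Complex.exp ((∑ l ∈ S2, z l ^2)/2) := by
    rw [hR, Finset.prod_congr rfl (fun l _ => MI_zero (z l)), Finset.prod_mul_distrib,
      Finset.prod_const, hcard, ← Complex.exp_sum]
    rw [Finset.sum_div]
  have hSsum : (∑ jj, z jj ^ 2) = z i0^2 + (z i1^2 + ∑ l ∈ S2, z l ^2) := by
    rw [← Finset.add_sum_erase _ _ (Finset.mem_univ i0), ← Finset.add_sum_erase _ _ hmem1]
  -- put everything together
  have main : ((Real.sqrt (2 * Real.pi) ^ m : ℝ) : ℂ)⁻¹ *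
      (∫ x : Fin m → ℝ,
        Complex.exp (-(∑ jj, z jj ^ 2) / 2 + (∑ jj, (x jj : ℂ) * z jj)
          - (∑ jj, (x jj : ℂ) ^ 2) / 4)
          * ((x i0 : ℂ) - Complex.I * (x i1 : ℂ)) ^ k
          * (Real.exp (-(∑ jj, x jj ^ 2) / 4) : ℂ))
      = (z i0 - Complex.I * z i1) ^ k := by
    rw [hIeq]
    have hsum2 : ∑ j ∈ range (k+1), ((k.choose j : ℕ):ℂ) * ((-Complex.I)^j
          * (A * ∏ l, MI (e j l) (z l)))
        = (A * R) * ∑ j ∈ range (k+1), ((k.choose j : ℕ):ℂ) * ((-Complex.I)^j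
          * (MI (k-j) (z i0) * MI j (z i1))) := by
      rw [Finset.mul_sum]
      refine Finset.sum_congr rfl fun j hj => ?_
      rw [hprodMI j]
      ring
    rw [hsum2, Skey, hRval, hA]
    have hexp : Complex.exp (-(∑ jj, z jj ^ 2) / 2) * Complex.exp ((∑ l ∈ S2, z l ^2)/2)
        * Complex.exp (((z i0)^2 + (z i1)^2)/2) = 1 := by
      rw [← Complex.exp_add, ← Complex.exp_add, ← Complex.exp_zero]
      congr 1
      rw [hSsum]
      ring
    have hpowm : ((Real.sqrt (2 * Real.pi) ^ m : ℝ) : ℂ)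
        = ((2*Real.pi : ℝ) : ℂ) * ((Real.sqrt (2*Real.pi) : ℝ) : ℂ)^(m-2) := by
      rw [← pow_mul_pow_sub (Real.sqrt (2*Real.pi)) hm, Real.sq_sqrt (by positivity)]
      push_cast
      ring
    have hne : ((Real.sqrt (2 * Real.pi) ^ m : ℝ) : ℂ) ≠ 0 := by
      simp only [ne_eq, Complex.ofReal_eq_zero]
      positivity
    rw [hpowm] at hne ⊢
    calc (((2*Real.pi : ℝ):ℂ) * ((Real.sqrt (2*Real.pi) : ℝ) : ℂ)^(m-2))⁻¹
          * (Complex.exp ((-∑ jj, z jj ^ 2) / 2)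
            * (((Real.sqrt (2*Real.pi) : ℝ) : ℂ)^(m-2)
              * Complex.exp ((∑ l ∈ S2, z l ^2)/2))
            * (((2*Real.pi : ℝ) : ℂ) * Complex.exp (((z i0)^2 + (z i1)^2)/2)
              * (z i0 - Complex.I * z i1)^k))
        = ((((2*Real.pi : ℝ):ℂ) * ((Real.sqrt (2*Real.pi) : ℝ) : ℂ)^(m-2))⁻¹
            * (((2*Real.pi : ℝ):ℂ) * ((Real.sqrt (2*Real.pi) : ℝ) : ℂ)^(m-2)))
          * ((Complex.exp ((-∑ jj, z jj ^ 2) / 2) * Complex.exp ((∑ l ∈ S2, z l ^2)/2)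
              * Complex.exp (((z i0)^2 + (z i1)^2)/2)) * (z i0 - Complex.I * z i1)^k) := by
          ring
      _ = (z i0 - Complex.I * z i1) ^ k := by
          rw [inv_mul_cancel₀ hne, hexp]
          ring
  exact main
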